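/- Fix an integer n ≥ 1 and a matrix W ∈ ℝ^{(2n+2)×(2n)} satisfying the one-hop margin constraints. Define W'' by W''[a_i,b_j]=W[b_i,c_j], W''[a_i,c_j]=W[b_i,b_j], W''[b_i,b_j]=W[a_i,c_j], W''[b_i,c_j]=W[a_i,b_j], W''[r_1,b_j]=W[r_2,c_j], W''[r_1,c_j]=W[r_2,b_j], W''[r_2,b_j]=W[r_1,c_j], W''[r_2,c_j]=W[r_1,b_j]. Then W'' also satisfies the one-hop margin constraints and ‖W''‖_* = ‖W‖_*. -/

import Mathlib

/-- The nuclear norm of a real matrix: the trace of the positive semidefinite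
square root of `Wᵀ * W` (equivalently, the sum of the singular values of `W`). -/
noncomputable def nuclearNorm {m k : Type*} [Fintype m] [Fintype k] [DecidableEq k]
    (W : Matrix m k ℝ) : ℝ :=
  ((Matrix.posSemidef_conjTranspose_mul_self W).1.eigenvectorUnitary.1 *
    Matrix.diagonal ((RCLike.ofReal : ℝ → ℝ) ∘ (√·) ∘ (Matrix.posSemidef_conjTranspose_mul_self W).1.eigenvalues) *
    (star (Matrix.posSemidef_conjTranspose_mul_self W).1.eigenvectorUnitary : Matrix k k ℝ)).trace

/-- The one-hop margin constraints: for every `i`,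
`W[a_i,b_i] + W[r_1,b_i] ≥ W[a_i,y] + W[r_1,y] + 1` for every output token `y ≠ b_i`, and
`W[b_i,c_i] + W[r_2,c_i] ≥ W[b_i,y] + W[r_2,y] + 1` for every output token `y ≠ c_i`. -/
def OneHopMargin (n : ℕ) (W : Matrix (Fin n ⊕ Fin n ⊕ Fin 2) (Fin n ⊕ Fin n) ℝ) : Prop :=
  ∀ i : Fin n,
    (∀ y : Fin n ⊕ Fin n, y ≠ Sum.inl i →
      W (Sum.inl i) (Sum.inl i) + W (Sum.inr (Sum.inr 0)) (Sum.inl i)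
        ≥ W (Sum.inl i) y + W (Sum.inr (Sum.inr 0)) y + 1) ∧
    (∀ y : Fin n ⊕ Fin n, y ≠ Sum.inr i →
      W (Sum.inr (Sum.inl i)) (Sum.inr i) + W (Sum.inr (Sum.inr 1)) (Sum.inr i)
        ≥ W (Sum.inr (Sum.inl i)) y + W (Sum.inr (Sum.inr 1)) y + 1)

/-- The matrix obtained from `W` by swapping the roles of the `a`- and `b`-rows, the
`b`- and `c`-columns, and the relations `r_1` and `r_2`. -/
def swapW (n : ℕ) (W : Matrix (Fin n ⊕ Fin n ⊕ Fin 2) (Fin n ⊕ Fin n) ℝ) :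
    Matrix (Fin n ⊕ Fin n ⊕ Fin 2) (Fin n ⊕ Fin n) ℝ :=
  fun r y =>
    match r, y with
    | Sum.inl i, Sum.inl j => W (Sum.inr (Sum.inl i)) (Sum.inr j)
    | Sum.inl i, Sum.inr j => W (Sum.inr (Sum.inl i)) (Sum.inl j)
    | Sum.inr (Sum.inl i), Sum.inl j => W (Sum.inl i) (Sum.inr j)
    | Sum.inr (Sum.inl i), Sum.inr j => W (Sum.inl i) (Sum.inl j)
    | Sum.inr (Sum.inr k), Sum.inl j =>
        W (Sum.inr (Sum.inr (if k = 0 then 1 else 0))) (Sum.inr j)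
    | Sum.inr (Sum.inr k), Sum.inr j =>
        W (Sum.inr (Sum.inr (if k = 0 then 1 else 0))) (Sum.inl j)

lemma nuclearNorm_eq_cfc {m k : Type*} [Fintype m] [Fintype k] [DecidableEq k]
    (W : Matrix m k ℝ) :
    nuclearNorm W = (cfc Real.sqrt (W.conjTranspose * W)).trace := by
  rw [(Matrix.posSemidef_conjTranspose_mul_self W).1.cfc_eq]
  rfl

open Matrix in
lemma nuclearNorm_submatrix {m k m' k' : Type*} [Fintype m] [Fintype k] [DecidableEq k]
    [Fintype m'] [Fintype k'] [DecidableEq k']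
    (W : Matrix m k ℝ) (e : m' ≃ m) (f : k' ≃ k) :
    nuclearNorm (W.submatrix e f) = nuclearNorm W := by
  have hprod : (W.submatrix e f)ᴴ * (W.submatrix e f) = (Wᴴ * W).submatrix f f := by
    rw [Matrix.conjTranspose_submatrix, Matrix.submatrix_mul_equiv]
  let φ : Matrix k k ℝ →⋆ₐ[ℝ] Matrix k' k' ℝ :=
    { (reindexAlgEquiv ℝ ℝ f.symm : Matrix k k ℝ →ₐ[ℝ] Matrix k' k' ℝ) with
      map_star' := fun x => by
        ext i j
        simp [reindexAlgEquiv, reindexRingEquiv] }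
  have hφ : ∀ x, φ x = x.submatrix f f := fun x => rfl
  have hc : Continuous φ := by
    have : (φ : Matrix k k ℝ → Matrix k' k' ℝ) = fun x => x.submatrix f f := funext hφ
    rw [this]
    exact continuous_id.matrix_submatrix _ _
  have hsa : IsSelfAdjoint (φ (Wᴴ * W)) := by
    rw [hφ, ← hprod]
    exact (posSemidef_conjTranspose_mul_self _).1.isSelfAdjoint
  rw [nuclearNorm_eq_cfc, nuclearNorm_eq_cfc, hprod, ← hφ,
    ← φ.map_cfc Real.sqrt (Wᴴ * W) (hφ := hc)
      (ha := (posSemidef_conjTranspose_mul_self W).1.isSelfAdjoint) (hφa := hsa), hφ]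
  simp only [Matrix.trace, Matrix.diag, Matrix.submatrix_apply]
  exact Fintype.sum_equiv f _ _ fun i => rfl

/-- The row permutation corresponding to `swapW`. -/
def rowPerm (n : ℕ) : (Fin n ⊕ Fin n ⊕ Fin 2) ≃ (Fin n ⊕ Fin n ⊕ Fin 2) where
  toFun r := match r with
    | Sum.inl i => Sum.inr (Sum.inl i)
    | Sum.inr (Sum.inl i) => Sum.inl i
    | Sum.inr (Sum.inr k) => Sum.inr (Sum.inr (if k = 0 then 1 else 0))
  invFun r := match r with
    | Sum.inl i => Sum.inr (Sum.inl i)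
    | Sum.inr (Sum.inl i) => Sum.inl i
    | Sum.inr (Sum.inr k) => Sum.inr (Sum.inr (if k = 0 then 1 else 0))
  left_inv := by rintro (i | i | k)
                 · rfl
                 · rfl
                 · fin_cases k <;> rfl
  right_inv := by rintro (i | i | k)
                  · rfl
                  · rfl
                  · fin_cases k <;> rfl

/-- The swap transformation preserves the one-hop margin constraints and the
nuclear norm. -/
theorem swapW_margin_and_nuclearNorm (n : ℕ) (hn : 1 ≤ n)
    (W : Matrix (Fin n ⊕ Fin n ⊕ Fin 2) (Fin n ⊕ Fin n) ℝ)
    (hW : OneHopMargin n W) :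
    OneHopMargin n (swapW n W) ∧ nuclearNorm (swapW n W) = nuclearNorm W := by
  constructor
  · intro i
    obtain ⟨h1, h2⟩ := hW i
    constructor
    · intro y hy
      cases y with
      | inl j =>
          have hne : (Sum.inr j : Fin n ⊕ Fin n) ≠ Sum.inr i := fun h =>
            hy (congrArg Sum.inl (Sum.inr.inj h))
          have := h2 (Sum.inr j) hne
          simpa [swapW] using this
      | inr j =>
          have := h2 (Sum.inl j) (by simp)
          simpa [swapW] using this
    · intro y hy
      cases y with
      | inl j =>
          have := h1 (Sum.inr j) (by simp)
          simpa [swapW] using this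
      | inr j =>
          have hne : (Sum.inl j : Fin n ⊕ Fin n) ≠ Sum.inl i := fun h =>
            hy (congrArg Sum.inr (Sum.inl.inj h))
          have := h1 (Sum.inl j) hne
          simpa [swapW] using this
  · have heq : swapW n W = W.submatrix (rowPerm n) (Equiv.sumComm (Fin n) (Fin n)) := by
      ext r y
      rcases r with i | i | k <;> rcases y with j | j <;> rfl
    rw [heq]
    exact nuclearNorm_submatrix W (rowPerm n) (Equiv.sumComm (Fin n) (Fin n))
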